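/- Let Λ and S be independent nonnegative real random variables with 𝔼[Λ²] < ∞, 𝔼[S²] < ∞ and the normalization 𝔼[Λ]·𝔼[S] = 1. For ρ ∈ (0,1) define ν_ρ(z) = 𝔼[exp(−ρΛS(1−z))] for z ∈ (0,1), and κ_ρ(z) = ν_ρ(z)·(1−z)·(1−ρ)/(ν_ρ(z) − z). Then for every s > 0, lim_{ρ↑1} κ_ρ(e^{−(1−ρ)s}) = 1/(1 + (1/2)·𝔼[Λ²]·𝔼[S²]·s). -/

import Mathlib

open MeasureTheory ProbabilityTheory Filter

private lemma g_nonneg {t : ℝ} (ht : 0 ≤ t) : 0 ≤ Real.exp (-t) - 1 + t := by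
  nlinarith [Real.add_one_le_exp (-t)]

private lemma g_le_sq {t : ℝ} (ht : 0 ≤ t) : Real.exp (-t) - 1 + t ≤ t ^ 2 := by
  have hmul : Real.exp (-t) * Real.exp t = 1 := by
    rw [← Real.exp_add]; simp
  nlinarith [mul_le_mul_of_nonneg_left (Real.add_one_le_exp t) (Real.exp_pos (-t)).le,
    mul_le_mul_of_nonneg_left (Real.add_one_le_exp (-t)) ht, hmul, (Real.exp_pos (-t)).le]

private lemma g_cubic {t : ℝ} (ht : |t| ≤ 1) :
    |Real.exp (-t) - 1 + t - t ^ 2 / 2| ≤ 2 / 9 * |t| ^ 3 := by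
  have h := Real.exp_bound (x := -t) (by simpa using ht) (n := 3) (by norm_num)
  norm_num [Finset.sum_range_succ] at h
  have h2 : Real.exp (-t) - 1 + t - t ^ 2 / 2 = Real.exp (-t) - (1 + -t + (-t) ^ 2 / 2) := by ring
  rw [h2]
  calc |Real.exp (-t) - (1 + -t + (-t) ^ 2 / 2)| ≤ |(-t)| ^ 3 * (4 / (6 * 3)) := by
        simpa [Finset.sum_range_succ, Nat.factorial] using
          Real.exp_bound (x := -t) (by simpa using ht) (n := 3) (by norm_num)
    _ = 2 / 9 * |t| ^ 3 := by rw [abs_neg]; ring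

private lemma exp_slope :
    Tendsto (fun x : ℝ => (1 - Real.exp (-x)) / x) (nhdsWithin 0 {0}ᶜ) (nhds 1) := by
  have h0 : HasDerivAt (fun x : ℝ => Real.exp (-x)) (-1) 0 := by
    simpa [Function.comp_def] using (Real.hasDerivAt_exp (-0)).comp 0 (hasDerivAt_neg (0:ℝ))
  have h1 : HasDerivAt (fun x : ℝ => 1 - Real.exp (-x)) 1 0 := by
    simpa [Pi.sub_def] using (hasDerivAt_const (0:ℝ) (1:ℝ)).sub h0
  have h2 := hasDerivAt_iff_tendsto_slope.mp h1
  refine h2.congr fun x => ?_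
  simp [slope_def_field]

private lemma g_div_sq_tendsto :
    Tendsto (fun t : ℝ => (Real.exp (-t) - 1 + t) / t ^ 2) (nhdsWithin 0 {0}ᶜ)
      (nhds (1 / 2)) := by
  have key : ∀ᶠ t in nhdsWithin (0:ℝ) {0}ᶜ,
      ‖(Real.exp (-t) - 1 + t) / t ^ 2 - 1 / 2‖ ≤ 2 / 9 * |t| := by
    have h1 : ∀ᶠ t in nhdsWithin (0:ℝ) {0}ᶜ, |t| ≤ 1 := by
      apply eventually_nhdsWithin_of_eventually_nhds
      filter_upwards [Metric.closedBall_mem_nhds (0:ℝ) one_pos] with t htt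
      simpa [Real.dist_eq] using htt
    filter_upwards [h1, eventually_mem_nhdsWithin] with t ht1 ht0
    have ht0' : t ≠ 0 := ht0
    have h2 : (Real.exp (-t) - 1 + t) / t ^ 2 - 1 / 2
        = (Real.exp (-t) - 1 + t - t ^ 2 / 2) / t ^ 2 := by
      have hpos : (0:ℝ) < t ^ 2 := by positivity
      rw [eq_div_iff hpos.ne', sub_mul, div_mul_cancel₀ _ hpos.ne']; ring
    have hpos : (0:ℝ) < t ^ 2 := by positivity
    rw [h2, Real.norm_eq_abs, abs_div, abs_of_pos hpos, div_le_iff₀ hpos]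
    calc |Real.exp (-t) - 1 + t - t ^ 2 / 2| ≤ 2 / 9 * |t| ^ 3 := g_cubic ht1
      _ = 2 / 9 * |t| * t ^ 2 := by
          rw [pow_succ, sq_abs]; ring
  have h0 : Tendsto (fun t : ℝ => 2 / 9 * |t|) (nhdsWithin 0 {0}ᶜ) (nhds 0) := by
    have hc : Tendsto (fun t : ℝ => 2 / 9 * |t|) (nhds 0) (nhds 0) := by
      simpa [Pi.mul_def] using (continuous_const.mul continuous_abs).tendsto (0:ℝ)
    exact hc.mono_left nhdsWithin_le_nhds
  have h3 := squeeze_zero_norm' key h0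
  have h4 := h3.add (tendsto_const_nhds (x := (1/2:ℝ)) (f := nhdsWithin (0:ℝ) {0}ᶜ))
  simpa using h4


private lemma aux_main {Ω : Type*} [MeasureSpace Ω] [IsProbabilityMeasure (ℙ : Measure Ω)]
    (X : Ω → ℝ) (hXm : Measurable X) (hX0 : ∀ ω, 0 ≤ X ω)
    (hXint : Integrable X) (hXmean : (∫ ω, X ω) = 1)
    (hX2 : Integrable (fun ω => X ω ^ 2))
    (s : ℝ) (hs : 0 < s) :
    Tendsto (fun ρ => (∫ ω, Real.exp (-(ρ * X ω * (1 - Real.exp (-(1 - ρ) * s))))) *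
        (1 - Real.exp (-(1 - ρ) * s)) * (1 - ρ) /
        ((∫ ω, Real.exp (-(ρ * X ω * (1 - Real.exp (-(1 - ρ) * s))))) - Real.exp (-(1 - ρ) * s)))
      (nhdsWithin 1 (Set.Ioo (0 : ℝ) 1))
      (nhds (1 / (1 + 1 / 2 * (∫ ω, X ω ^ 2) * s))) := by
  set L := nhdsWithin (1:ℝ) (Set.Ioo (0:ℝ) 1) with hLdef
  set z : ℝ → ℝ := fun ρ => Real.exp (-(1 - ρ) * s) with hzdef
  set u : ℝ → ℝ := fun ρ => 1 - Real.exp (-(1 - ρ) * s) with hudef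
  have hLle : L ≤ nhds 1 := nhdsWithin_le_nhds
  have hmem : ∀ᶠ ρ in L, ρ ∈ Set.Ioo (0:ℝ) 1 := eventually_mem_nhdsWithin
  have hupos : ∀ ρ ∈ Set.Ioo (0:ℝ) 1, 0 < u ρ := by
    intro ρ hρ
    have h1 : -(1 - ρ) * s < 0 := by nlinarith [hρ.2]
    have h2 : Real.exp (-(1 - ρ) * s) < 1 := Real.exp_lt_one_iff.mpr h1
    simp only [hudef]; linarith
  have hρtend : Tendsto (fun ρ : ℝ => ρ) L (nhds 1) :=
    (continuous_id.tendsto 1).mono_left hLle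
  have hu0 : Tendsto u L (nhds 0) := by
    have hc : Continuous u := by
      rw [hudef]; fun_prop
    have h := (hc.tendsto 1).mono_left hLle
    have h1 : u 1 = 0 := by simp [hudef]
    rwa [h1] at h
  have hus : Tendsto (fun ρ => u ρ / (1 - ρ)) L (nhds s) := by
    have hx : Tendsto (fun ρ => (1 - ρ) * s) L (nhdsWithin 0 {0}ᶜ) := by
      rw [tendsto_nhdsWithin_iff]
      constructor
      · have hc : Continuous fun ρ : ℝ => (1 - ρ) * s := by fun_prop
        have h := (hc.tendsto 1).mono_left hLle
        simpa using h
      · filter_upwards [hmem] with ρ hρ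
        have : 0 < (1 - ρ) * s := by nlinarith [hρ.2]
        simpa using this.ne'
    have hcomp := exp_slope.comp hx
    have h := (tendsto_const_nhds (x := s) (f := L)).mul hcomp
    rw [mul_one] at h
    refine h.congr' ?_
    filter_upwards [hmem] with ρ hρ
    have h1 : (1:ℝ) - ρ ≠ 0 := by nlinarith [hρ.2]
    simp only [Function.comp_apply, hudef, neg_mul]
    field_simp
  have hmeas : ∀ ρ : ℝ, Measurable fun ω => Real.exp (-(ρ * X ω * u ρ)) :=
    fun ρ => Real.measurable_exp.comp (((hXm.const_mul ρ).mul_const (u ρ)).neg)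
  have hgmeas : ∀ ρ : ℝ,
      Measurable fun ω => Real.exp (-(ρ * X ω * u ρ)) - 1 + ρ * X ω * u ρ :=
    fun ρ => ((hmeas ρ).sub measurable_const).add ((hXm.const_mul ρ).mul_const (u ρ))
  have hν1 : Tendsto (fun ρ => ∫ ω, Real.exp (-(ρ * X ω * u ρ))) L (nhds 1) := by
    have h := tendsto_integral_filter_of_dominated_convergence (μ := (ℙ : Measure Ω)) (l := L)
      (F := fun ρ (ω : Ω) => Real.exp (-(ρ * X ω * u ρ))) (f := fun _ => (1:ℝ))
      (fun _ => (1:ℝ))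
      (Eventually.of_forall fun ρ => (hmeas ρ).aestronglyMeasurable)
      ?_ (integrable_const 1) ?_
    · simpa using h
    · filter_upwards [hmem] with ρ hρ
      refine Eventually.of_forall fun ω => ?_
      rw [Real.norm_eq_abs, abs_of_pos (Real.exp_pos _)]
      apply Real.exp_le_one_iff.mpr
      have h0 : 0 ≤ ρ * X ω * u ρ :=
        mul_nonneg (mul_nonneg hρ.1.le (hX0 ω)) (hupos ρ hρ).le
      linarith
    · refine Eventually.of_forall fun ω => ?_
      have h1 : Tendsto (fun ρ => ρ * X ω * u ρ) L (nhds 0) := by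
        have := (hρtend.mul_const (X ω)).mul hu0
        simpa using this
      have h1' : Tendsto (fun ρ => -(ρ * X ω * u ρ)) L (nhds 0) := by
        simpa using h1.neg
      have h2 := (Real.continuous_exp.tendsto 0).comp h1'
      simpa [Function.comp_def] using h2
  have hGq : Tendsto
      (fun ρ => ∫ ω, (Real.exp (-(ρ * X ω * u ρ)) - 1 + ρ * X ω * u ρ) / (u ρ) ^ 2)
      L (nhds ((∫ ω, X ω ^ 2) / 2)) := by
    have h := tendsto_integral_filter_of_dominated_convergence (μ := (ℙ : Measure Ω)) (l := L)
      (F := fun ρ (ω : Ω) => (Real.exp (-(ρ * X ω * u ρ)) - 1 + ρ * X ω * u ρ) / (u ρ) ^ 2)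
      (f := fun ω => X ω ^ 2 / 2) (fun ω => X ω ^ 2)
      (Eventually.of_forall fun ρ => ((hgmeas ρ).div_const _).aestronglyMeasurable)
      ?_ hX2 ?_
    · rw [integral_div] at h; exact h
    · filter_upwards [hmem] with ρ hρ
      refine Eventually.of_forall fun ω => ?_
      have hup := hupos ρ hρ
      have ht0 : 0 ≤ ρ * X ω * u ρ :=
        mul_nonneg (mul_nonneg hρ.1.le (hX0 ω)) hup.le
      have hpos2 : (0:ℝ) < (u ρ) ^ 2 := by positivity
      rw [Real.norm_eq_abs, abs_div, abs_of_nonneg (g_nonneg ht0), abs_of_pos hpos2,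
        div_le_iff₀ hpos2]
      have hsq1 : ρ ^ 2 ≤ 1 := by nlinarith [hρ.1, hρ.2]
      calc Real.exp (-(ρ * X ω * u ρ)) - 1 + ρ * X ω * u ρ
          ≤ (ρ * X ω * u ρ) ^ 2 := g_le_sq ht0
        _ = ρ ^ 2 * (X ω * u ρ) ^ 2 := by ring
        _ ≤ 1 * (X ω * u ρ) ^ 2 := mul_le_mul_of_nonneg_right hsq1 (sq_nonneg _)
        _ = X ω ^ 2 * u ρ ^ 2 := by ring
    · refine Eventually.of_forall fun ω => ?_
      show Tendsto (fun ρ => (Real.exp (-(ρ * X ω * u ρ)) - 1 + ρ * X ω * u ρ) / (u ρ) ^ 2)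
        L (nhds (X ω ^ 2 / 2))
      rcases eq_or_lt_of_le (hX0 ω) with hx0 | hx0
      · have hzero : ∀ ρ : ℝ,
            (Real.exp (-(ρ * X ω * u ρ)) - 1 + ρ * X ω * u ρ) / (u ρ) ^ 2 = 0 := by
          intro ρ; simp [← hx0]
        have h := (tendsto_const_nhds (x := (0:ℝ)) (f := L))
        have h2 : X ω ^ 2 / 2 = 0 := by rw [← hx0]; norm_num
        rw [h2]
        exact h.congr fun ρ => (hzero ρ).symm
      · have hxt : Tendsto (fun ρ => ρ * X ω * u ρ) L (nhdsWithin 0 {0}ᶜ) := by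
          rw [tendsto_nhdsWithin_iff]
          constructor
          · have := (hρtend.mul_const (X ω)).mul hu0
            simpa using this
          · filter_upwards [hmem] with ρ hρ
            have : 0 < ρ * X ω * u ρ :=
              mul_pos (mul_pos hρ.1 hx0) (hupos ρ hρ)
            simpa using this.ne'
        have hcomp := g_div_sq_tendsto.comp hxt
        have hsq : Tendsto (fun ρ => (ρ * X ω) ^ 2) L (nhds (X ω ^ 2)) := by
          have h1 := hρtend.mul_const (X ω)
          have h2 := h1.mul h1
          simpa [pow_two] using h2
        have h := hsq.mul hcomp
        have hval : X ω ^ 2 * (1 / 2) = X ω ^ 2 / 2 := by ring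
        rw [hval] at h
        refine h.congr' ?_
        filter_upwards [hmem] with ρ hρ
        have hune := (hupos ρ hρ).ne'
        have htne : ρ * X ω * u ρ ≠ 0 :=
          (mul_pos (mul_pos hρ.1 hx0) (hupos ρ hρ)).ne'
        have hρne : ρ ≠ 0 := hρ.1.ne'
        have hxne : X ω ≠ 0 := hx0.ne'
        simp only [Function.comp_apply]
        field_simp
  have hgint : ∀ ρ ∈ Set.Ioo (0:ℝ) 1,
      Integrable (fun ω => Real.exp (-(ρ * X ω * u ρ)) - 1 + ρ * X ω * u ρ) := by
    intro ρ hρ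
    refine Integrable.mono' (hX2.const_mul ((ρ * u ρ) ^ 2))
      ((hgmeas ρ).aestronglyMeasurable) ?_
    refine Eventually.of_forall fun ω => ?_
    have ht0 : 0 ≤ ρ * X ω * u ρ :=
      mul_nonneg (mul_nonneg hρ.1.le (hX0 ω)) (hupos ρ hρ).le
    rw [Real.norm_eq_abs, abs_of_nonneg (g_nonneg ht0)]
    calc Real.exp (-(ρ * X ω * u ρ)) - 1 + ρ * X ω * u ρ
        ≤ (ρ * X ω * u ρ) ^ 2 := g_le_sq ht0
      _ = (ρ * u ρ) ^ 2 * X ω ^ 2 := by ring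
  have hkey : ∀ ρ ∈ Set.Ioo (0:ℝ) 1,
      (∫ ω, Real.exp (-(ρ * X ω * u ρ))) - z ρ
        = (∫ ω, (Real.exp (-(ρ * X ω * u ρ)) - 1 + ρ * X ω * u ρ)) + u ρ * (1 - ρ) := by
    intro ρ hρ
    have h1 : Integrable (fun ω => 1 - ρ * X ω * u ρ) :=
      (integrable_const 1).sub ((hXint.const_mul ρ).mul_const (u ρ))
    have h2 : (fun ω => Real.exp (-(ρ * X ω * u ρ)))
        = fun ω => (Real.exp (-(ρ * X ω * u ρ)) - 1 + ρ * X ω * u ρ) + (1 - ρ * X ω * u ρ) := by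
      funext ω; ring
    rw [h2, integral_add (hgint ρ hρ) h1]
    have h3 : (∫ ω, (1 - ρ * X ω * u ρ)) = 1 - ρ * u ρ := by
      rw [integral_sub (integrable_const 1) ((hXint.const_mul ρ).mul_const (u ρ))]
      have h4 : (fun ω => ρ * X ω * u ρ) = fun ω => (ρ * u ρ) * X ω := by
        funext ω; ring
      rw [h4, integral_const_mul, hXmean]
      simp
    rw [h3]
    have hz : z ρ = 1 - u ρ := by simp [hzdef, hudef]
    rw [hz]; ring
  have hW : Tendsto
      (fun ρ => ((∫ ω, Real.exp (-(ρ * X ω * u ρ))) - z ρ) / (u ρ * (1 - ρ)))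
      L (nhds (1 + (∫ ω, X ω ^ 2) / 2 * s)) := by
    have h := (tendsto_const_nhds (x := (1:ℝ)) (f := L)).add (hGq.mul hus)
    refine h.congr' ?_
    filter_upwards [hmem] with ρ hρ
    have hune := (hupos ρ hρ).ne'
    have hεne : (1:ℝ) - ρ ≠ 0 := by nlinarith [hρ.2]
    rw [hkey ρ hρ, integral_div]
    field_simp
    ring
  have hXpos : (0:ℝ) ≤ ∫ ω, X ω ^ 2 := integral_nonneg fun ω => sq_nonneg _
  have hne : (1:ℝ) + (∫ ω, X ω ^ 2) / 2 * s ≠ 0 := by nlinarith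
  have hfin := hν1.div hW hne
  have hval : (1:ℝ) / (1 + (∫ ω, X ω ^ 2) / 2 * s)
      = 1 / (1 + 1 / 2 * (∫ ω, X ω ^ 2) * s) := by ring_nf
  rw [hval] at hfin
  refine hfin.congr fun ρ => ?_
  simp only [Pi.div_apply]
  rw [div_div_eq_mul_div, ← mul_assoc]


/-- Heavy-traffic limit of the stationary queue-length transform of the M/G/1 queue
with endogenously resampled arrival rate: with `Λ, S` independent, nonnegative,
square-integrable, normalized by `E[Λ]E[S] = 1`, and
`ν_ρ(z) = E[exp(-ρΛS(1-z))]`, `κ_ρ(z) = ν_ρ(z)(1-z)(1-ρ)/(ν_ρ(z)-z)`, one has for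
every `s > 0`:
`lim_{ρ↑1} κ_ρ(e^{-(1-ρ)s}) = 1/(1 + (1/2)E[Λ²]E[S²]s)`. -/
theorem stmt15 {Ω : Type*} [MeasureSpace Ω] [IsProbabilityMeasure (ℙ : Measure Ω)]
    (Lam S : Ω → ℝ)
    (hLam : Measurable Lam) (hS : Measurable S)
    (hLpos : ∀ ω, 0 ≤ Lam ω) (hSpos : ∀ ω, 0 ≤ S ω)
    (hLS : IndepFun Lam S ℙ)
    (hLint : Integrable Lam) (hSint : Integrable S)
    (hL2 : Integrable (fun ω => Lam ω ^ 2)) (hS2 : Integrable (fun ω => S ω ^ 2))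
    (hnorm : (∫ ω, Lam ω) * (∫ ω, S ω) = 1)
    (ν : ℝ → ℝ → ℝ)
    (hν : ν = fun ρ z => ∫ ω, Real.exp (-(ρ * Lam ω * S ω * (1 - z))))
    (κ : ℝ → ℝ → ℝ)
    (hκ : κ = fun ρ z => ν ρ z * (1 - z) * (1 - ρ) / (ν ρ z - z)) :
    ∀ s > (0 : ℝ),
      Tendsto (fun ρ => κ ρ (Real.exp (-(1 - ρ) * s)))
        (nhdsWithin 1 (Set.Ioo (0 : ℝ) 1))
        (nhds (1 / (1 + (1 / 2) * (∫ ω, Lam ω ^ 2) * (∫ ω, S ω ^ 2) * s))) := by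
  subst hκ hν
  intro s hs
  have hsq : Measurable fun x : ℝ => x ^ 2 := measurable_id.pow_const 2
  have h2ind := hLS.comp hsq hsq
  have hXint : Integrable (fun ω => Lam ω * S ω) := by
    have h := hLS.integrable_mul hLint hSint
    exact h.congr (Eventually.of_forall fun ω => rfl)
  have hXmean : (∫ ω, Lam ω * S ω) = 1 := by
    have h := hLS.integral_mul_eq_mul_integral hLint.1 hSint.1
    rw [show (Lam * S) = fun ω => Lam ω * S ω from rfl] at h
    rw [h]; exact hnorm
  have hX2 : Integrable (fun ω => (Lam ω * S ω) ^ 2) := by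
    have h := h2ind.integrable_mul hL2 hS2
    exact h.congr (Eventually.of_forall fun ω => by
      simp [Function.comp, mul_pow])
  have hm2 : (∫ ω, (Lam ω * S ω) ^ 2) = (∫ ω, Lam ω ^ 2) * (∫ ω, S ω ^ 2) := by
    have h := h2ind.integral_mul_eq_mul_integral hL2.1 hS2.1
    have h1 : (∫ ω, (Lam ω * S ω) ^ 2)
        = ∫ ω, ((fun x : ℝ => x ^ 2) ∘ Lam * (fun x : ℝ => x ^ 2) ∘ S) ω := by
      apply integral_congr_ae
      exact Eventually.of_forall fun ω => by simp [Function.comp, mul_pow]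
    rw [h1]
    exact h
  have key := aux_main (fun ω => Lam ω * S ω) (hLam.mul hS)
    (fun ω => mul_nonneg (hLpos ω) (hSpos ω)) hXint hXmean hX2 s hs
  rw [hm2] at key
  have hval : (1:ℝ) / (1 + 1 / 2 * ((∫ ω, Lam ω ^ 2) * (∫ ω, S ω ^ 2)) * s)
      = 1 / (1 + 1 / 2 * (∫ ω, Lam ω ^ 2) * (∫ ω, S ω ^ 2) * s) := by ring_nf
  rw [hval] at key
  refine key.congr fun ρ => ?_
  have hA : (∫ ω, Real.exp (-(ρ * (Lam ω * S ω) * (1 - Real.exp (-(1 - ρ) * s)))))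
      = ∫ ω, Real.exp (-(ρ * Lam ω * S ω * (1 - Real.exp (-(1 - ρ) * s)))) := by
    apply integral_congr_ae
    exact Eventually.of_forall fun ω => by simp only []; congr 1; ring
  simp only []
  rw [hA]
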